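/- For every word w ∈ {a,b}*, the PWA of Figure 2(a) accepts w $^ω with probability exactly (1/2)·(1 − (1/2)^{#_a(w)} + (1/2)^{#_b(w)}), where #_x(w) is the number of occurrences of x in w. In particular this probability is > 1/2 if and only if #_a(w) > #_b(w). -/

import Mathlib

/-- One step of the PWA of Figure 2(a) on the sub-alphabet `{a,b}` (`true` = `a`,
`false` = `b`), acting on the probability masses `(x, y, z)` of the states
`(q_a, q_b, q_+)`.  On `a`: half of the mass at `q_a` moves to `q_+`; on `b`: half of
the mass at `q_b` is lost to the rejecting sink. -/
noncomputable def pwaStep (s : ℝ × ℝ × ℝ) (c : Bool) : ℝ × ℝ × ℝ :=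
  match c, s with
  | true,  (x, y, z) => (x / 2, y, z + x / 2)
  | false, (x, y, z) => (x, y / 2, z)

lemma pwa_fold (w : List Bool) : ∀ u v : ℝ,
    w.foldl pwaStep (u, v, 1/2 - u)
      = (u * (1/2) ^ w.count true, v * (1/2) ^ w.count false,
          1/2 - u * (1/2) ^ w.count true) := by
  induction w with
  | nil => intro u v; simp
  | cons c w ih =>
      intro u v
      cases c with
      | true =>
          have h : pwaStep (u, v, 1/2 - u) true = (u/2, v, 1/2 - u/2) := by
            simp [pwaStep]; ring
          rw [List.foldl_cons, h, ih (u/2) v]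
          simp [List.count_cons]
          rw [pow_succ]; ring
      | false =>
          have h : pwaStep (u, v, 1/2 - u) false = (u, v/2, 1/2 - u) := by
            simp [pwaStep]
          rw [List.foldl_cons, h, ih u (v/2)]
          simp [List.count_cons]
          ring

theorem stmt_8 (w : List Bool) :
    ((w.foldl pwaStep (1/2, 1/2, 0)).2.1 + (w.foldl pwaStep (1/2, 1/2, 0)).2.2
        = (1/2) * (1 - (1/2) ^ (w.count true) + (1/2) ^ (w.count false))) ∧
    ((w.foldl pwaStep (1/2, 1/2, 0)).2.1 + (w.foldl pwaStep (1/2, 1/2, 0)).2.2 > 1/2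
        ↔ w.count true > w.count false) := by
  have h0 : ((1:ℝ)/2, (1:ℝ)/2, (0:ℝ)) = ((1:ℝ)/2, (1:ℝ)/2, 1/2 - 1/2) := by norm_num
  rw [h0, pwa_fold w (1/2) (1/2)]
  constructor
  · ring
  · dsimp only
    constructor
    · intro h
      by_contra hle
      push_neg at hle
      have : ((1:ℝ)/2) ^ w.count false ≤ (1/2) ^ w.count true :=
        pow_le_pow_of_le_one (by norm_num) (by norm_num) hle
      nlinarith
    · intro h
      have : ((1:ℝ)/2) ^ w.count true < (1/2) ^ w.count false :=
        pow_lt_pow_right_of_lt_one₀ (by norm_num) (by norm_num) h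
      nlinarith
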